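/- arXiv:1607.03291 — 2 statements merged into one kernel-verified Lean document; each statement's English description precedes it below -/
import Mathlib

section
/- Let X be a finite set with at least two elements and let 𝓕 be a family of subsets of X with ⋃𝓕 = X. Then 𝔣𝔯(𝓕 ∪ {X} ∪ {{x} : x ∈ X}) = max(1, 𝔣𝔯(𝓕)). -/
open Cardinal

noncomputable section

/-- The underlying set of the ordinal `ω_n`, the least ordinal of cardinality `ℵ_n`,
realized as a type. -/
abbrev OmegaN (n : ℕ) : Type := ((Cardinal.aleph n).ord).ToType

/-- `n` is *free* for the family `𝓕` of finite sets: for every set mapping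
`S : [ω_n]^{<ω} → [ω_n]^{<ω}` there is a bijection `u` from `⋃ 𝓕` onto a subset
`Y = u '' (⋃ 𝓕)` of `ω_n` such that `S (u '' A) ∩ Y ⊆ u '' A` for all `A ∈ 𝓕`. -/
def IsFree {α : Type*} [DecidableEq α] (𝓕 : Finset (Finset α)) (n : ℕ) : Prop :=
  ∀ S : Finset (OmegaN n) → Finset (OmegaN n),
    ∃ u : α → OmegaN n, Set.InjOn u ↑(𝓕.sup id) ∧
      ∀ A ∈ 𝓕, S (A.image u) ∩ (𝓕.sup id).image u ⊆ A.image u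

/-- The index `𝔣𝔯 𝓕`: the least `n` which is free for `𝓕`. -/
noncomputable def fr {α : Type*} [DecidableEq α] (𝓕 : Finset (Finset α)) : ℕ :=
  sInf {n | IsFree 𝓕 n}

lemma mk_omegaN (n : ℕ) : #(OmegaN n) = aleph n := by
  rw [Cardinal.mk_toType, Cardinal.card_ord]

instance omegaN_infinite (n : ℕ) : Infinite (OmegaN n) := by
  rw [Cardinal.infinite_iff, mk_omegaN]; exact Cardinal.aleph0_le_aleph n

/-- Closure lemma: a set of size `κ` closed under a finite-set mapping. -/
lemma exists_closed {β : Type} (S : Finset β → Finset β) {κ : Cardinal}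
    (hκ : ℵ₀ ≤ κ) (hβ : κ ≤ #β) :
    ∃ M : Set β, #M = κ ∧ ∀ F : Finset β, ↑F ⊆ M → ↑(S F) ⊆ M := by
  classical
  obtain ⟨A0, hA0⟩ := Cardinal.le_mk_iff_exists_set.1 hβ
  let step : Set β → Set β := fun M => M ∪ ⋃ (F : {F : Finset β // ↑F ⊆ M}), ↑(S F.1)
  let Ms : ℕ → Set β := fun k => step^[k] A0
  have hstep : ∀ k, Ms (k+1) = step (Ms k) := by
    intro k; simp only [Ms, Function.iterate_succ_apply']
  have hmono : Monotone Ms := by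
    apply monotone_nat_of_le_succ
    intro k; rw [hstep]; exact Set.subset_union_left
  have hA0sub : ∀ k, A0 ⊆ Ms k := fun k => hmono (Nat.zero_le k)
  have hTle : ∀ (M : Set β), ℵ₀ ≤ #M → #{F : Finset β // ↑F ⊆ M} ≤ #M := by
    intro M hM
    haveI : Infinite M := Cardinal.infinite_iff.2 hM
    have hsurj : Function.Surjective
        (fun (G : Finset M) => (⟨G.map (Function.Embedding.subtype _),
          fun x hx => by
            obtain ⟨y, _, rfl⟩ := Finset.mem_map.1 (Finset.mem_coe.1 hx)
            exact y.2⟩ :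
          {F : Finset β // ↑F ⊆ M})) := by
      rintro ⟨F, hF⟩
      refine ⟨F.attach.image (fun x => (⟨x.1, hF x.2⟩ : M)), ?_⟩
      apply Subtype.ext
      ext a
      constructor
      · intro h
        obtain ⟨y, hy, rfl⟩ := Finset.mem_map.1 h
        obtain ⟨x, _, rfl⟩ := Finset.mem_image.1 hy
        exact x.2
      · intro ha
        exact Finset.mem_map.2 ⟨⟨a, hF ha⟩,
          Finset.mem_image.2 ⟨⟨a, ha⟩, Finset.mem_attach _ _, rfl⟩, rfl⟩
    calc #{F : Finset β // ↑F ⊆ M} ≤ #(Finset M) := Cardinal.mk_le_of_surjective hsurj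
      _ = #M := Cardinal.mk_finset_of_infinite _
  have hcard : ∀ k, #(Ms k) ≤ κ := by
    intro k; induction k with
    | zero => exact hA0.le
    | succ k ih =>
      rw [hstep]
      have hMinf : ℵ₀ ≤ #(Ms k) := le_trans (by rw [hA0]; exact hκ)
        (Cardinal.mk_le_mk_of_subset (hA0sub k))
      have h1 : #(⋃ (F : {F : Finset β // ↑F ⊆ Ms k}), (↑(S F.1) : Set β)) ≤ κ := by
        refine le_trans (Cardinal.mk_iUnion_le_sum_mk) ?_
        refine le_trans (Cardinal.sum_le_sum _ (fun _ => ℵ₀)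
          (fun F => ((S F.1).finite_toSet.lt_aleph0).le)) ?_
        rw [Cardinal.sum_const']
        calc #{F : Finset β // ↑F ⊆ Ms k} * ℵ₀ ≤ κ * κ :=
              mul_le_mul' (le_trans (hTle _ hMinf) ih) hκ
          _ = κ := Cardinal.mul_eq_self hκ
      refine le_trans (Cardinal.mk_union_le _ _) ?_
      rw [← Cardinal.add_eq_self hκ]
      exact add_le_add ih h1
  refine ⟨⋃ k, Ms k, ?_, ?_⟩
  · apply le_antisymm
    · refine le_trans (Cardinal.mk_iUnion_le_sum_mk) ?_
      refine le_trans (Cardinal.sum_le_sum _ (fun _ => κ) hcard) ?_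
      rw [Cardinal.sum_const', Cardinal.mk_nat]
      calc ℵ₀ * κ ≤ κ * κ := mul_le_mul' hκ le_rfl
        _ = κ := Cardinal.mul_eq_self hκ
    · rw [← hA0]; exact Cardinal.mk_le_mk_of_subset (Set.subset_iUnion Ms 0)
  · intro F hF
    have hFk : ∃ k, ↑F ⊆ Ms k := by
      classical
      induction F using Finset.cons_induction with
      | empty => exact ⟨0, by simp⟩
      | cons a F ha ih =>
        obtain ⟨k1, hk1⟩ := ih (Set.Subset.trans
          (by rw [Finset.coe_cons]; exact Set.subset_insert _ _) hF)
        have ha' : a ∈ ⋃ k, Ms k := hF (by simp)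
        obtain ⟨k2, hk2⟩ := Set.mem_iUnion.1 ha'
        refine ⟨max k1 k2, ?_⟩
        rw [Finset.coe_cons]
        exact Set.insert_subset (hmono (le_max_right k1 k2) hk2)
          (Set.Subset.trans hk1 (hmono (le_max_left k1 k2)))
    obtain ⟨k, hk⟩ := hFk
    have : ↑(S F) ⊆ Ms (k+1) := by
      rw [hstep]
      intro x hx
      exact Set.mem_union_right _ (Set.mem_iUnion.2 ⟨⟨F, hk⟩, hx⟩)
    exact le_trans this (Set.subset_iUnion Ms (k+1))

/-- Kuratowski's free set theorem (positive direction): on `ω_n` every set mapping on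
finite sets has a strongly free set of size `n+1`. -/
lemma kuratowski (n : ℕ) : ∀ (β : Type), #β = aleph n → ∀ S : Finset β → Finset β,
    ∃ Y : Finset β, n + 1 ≤ Y.card ∧ ∀ F ⊆ Y, ∀ y ∈ S F, y ∈ Y → y ∈ F := by
  induction n with
  | zero =>
    intro β hβ S
    haveI : Infinite β := Cardinal.infinite_iff.2
      (by rw [hβ]; exact Cardinal.aleph0_le_aleph 0)
    obtain ⟨y, hy⟩ := Infinite.exists_notMem_finset (S ∅)
    refine ⟨{y}, by simp, ?_⟩
    intro F hF z hz hzY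
    rcases Finset.subset_singleton_iff.1 hF with rfl | rfl
    · rw [Finset.mem_singleton] at hzY
      subst hzY
      exact absurd hz hy
    · exact hzY
  | succ n ih =>
    intro β hβ S
    classical
    have hκβ : (aleph n) ≤ #β := by
      rw [hβ]
      exact Cardinal.aleph_le_aleph.2 (by exact_mod_cast Nat.le_succ n)
    obtain ⟨M, hM, hMcl⟩ := exists_closed S (Cardinal.aleph0_le_aleph n) hκβ
    have hpex : ∃ p, p ∉ M := by
      by_contra h
      push_neg at h
      have huniv : M = Set.univ := Set.eq_univ_of_forall h
      rw [huniv, Cardinal.mk_univ, hβ] at hM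
      have : (aleph (n+1 : ℕ)) < aleph (n+1 : ℕ) := by
        conv_lhs => rw [hM]
        exact Cardinal.aleph_lt_aleph.2 (by exact_mod_cast Nat.lt_succ_self n)
      exact absurd this (lt_irrefl _)
    obtain ⟨p, hp⟩ := hpex
    set emb : M → β := Subtype.val with hemb
    have hinj : Function.Injective emb := Subtype.val_injective
    set S' : Finset M → Finset M := fun F =>
      Finset.preimage (S (F.image emb) ∪ S (insert p (F.image emb))) emb hinj.injOn
      with hS'
    obtain ⟨Y', hY'card, hY'free⟩ := ih M hM S'
    have hpim : p ∉ Y'.image emb := by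
      intro h
      obtain ⟨z, _, rfl⟩ := Finset.mem_image.1 h
      exact hp z.2
    refine ⟨insert p (Y'.image emb), ?_, ?_⟩
    · rw [Finset.card_insert_of_notMem hpim, Finset.card_image_of_injective Y' hinj]
      omega
    · intro F hF y hyS hyY
      have himM : ∀ x, x ∈ Y'.image emb → x ∈ M := by
        intro x hx
        obtain ⟨z, _, rfl⟩ := Finset.mem_image.1 hx
        exact z.2
      rcases Finset.mem_insert.1 hyY with rfl | hy
      · -- y = p
        by_contra hpF
        have hFM : ↑F ⊆ M := by
          intro x hx
          rcases Finset.mem_insert.1 (hF (Finset.mem_coe.1 hx)) with h2 | h2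
          · exact absurd (h2 ▸ Finset.mem_coe.1 hx) hpF
          · exact himM x h2
        exact hp (hMcl F hFM (Finset.mem_coe.2 hyS))
      · obtain ⟨z, hz, rfl⟩ := Finset.mem_image.1 hy
        set G : Finset M := Finset.preimage (F.erase p) emb hinj.injOn with hGdef
        have hGY' : G ⊆ Y' := by
          intro w hw
          have hw' : emb w ∈ F.erase p := Finset.mem_preimage.1 hw
          rcases Finset.mem_insert.1 (hF (Finset.mem_of_mem_erase hw')) with h2 | h2
          · exact absurd h2 (Finset.ne_of_mem_erase hw')
          · obtain ⟨w', hw'', hww⟩ := Finset.mem_image.1 h2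
            rwa [← hinj hww]
        have hGF : G.image emb = F.erase p := by
          ext a
          constructor
          · intro h
            obtain ⟨w, hw, rfl⟩ := Finset.mem_image.1 h
            exact Finset.mem_preimage.1 hw
          · intro ha
            rcases Finset.mem_insert.1 (hF (Finset.mem_of_mem_erase ha)) with h2 | h2
            · exact absurd h2 (Finset.ne_of_mem_erase ha)
            · obtain ⟨w, hw, rfl⟩ := Finset.mem_image.1 h2
              exact Finset.mem_image.2 ⟨w, Finset.mem_preimage.2 ha, rfl⟩
        have hzS' : z ∈ S' G := by
          rw [hS']
          rw [Finset.mem_preimage]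
          by_cases hpF : p ∈ F
          · apply Finset.mem_union_right
            have : insert p (G.image emb) = F := by
              rw [hGF, Finset.insert_erase hpF]
            rwa [this]
          · apply Finset.mem_union_left
            have : G.image emb = F := by
              rw [hGF, Finset.erase_eq_of_notMem hpF]
            rwa [this]
        have hzG : z ∈ G := hY'free G hGY' z hzS' hz
        have : emb z ∈ F.erase p := by
          rw [← hGF]
          exact Finset.mem_image_of_mem emb hzG
        exact Finset.mem_of_mem_erase this

/-- Auxiliary induction for the free-set theorem, on a uniform bound for image sizes. -/
lemma free_aux {β : Type} {κ : Cardinal} (hreg : κ.IsRegular) (hun : ℵ₀ < κ) :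
    ∀ (m : ℕ) (f : β → Finset β) (A : Set β), #A = κ → (∀ a ∈ A, (f a).card ≤ m) →
    ∃ H : Set β, H ⊆ A ∧ #H = κ ∧ ∀ a ∈ H, ∀ b ∈ H, b ∈ f a → b = a := by
  classical
  intro m
  induction m with
  | zero =>
    intro f A hA hb
    refine ⟨A, le_refl _, hA, fun a ha b _ hbf => absurd hbf ?_⟩
    have h0 := hb a ha
    rw [Nat.le_zero, Finset.card_eq_zero] at h0
    simp [h0]
  | succ m ihm =>
    intro f A hA hbound
    by_cases hcase : ∃ x : β, ¬ (#{a : β | a ∈ A ∧ x ∈ f a} < κ)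
    · obtain ⟨x, hx⟩ := hcase
      set B := {a : β | a ∈ A ∧ x ∈ f a} \ {x} with hB
      have hBA : B ⊆ A := fun a ha => ha.1.1
      have hnotlt : ¬ (#B < κ) := by
        intro hlt
        apply hx
        have h1 : #{a : β | a ∈ A ∧ x ∈ f a} ≤ #B + 1 := by
          refine le_trans (Cardinal.mk_le_mk_of_subset (?_ : _ ⊆ B ∪ {x})) ?_
          · intro a ha
            by_cases h : a = x
            · exact Or.inr (by simp [h])
            · exact Or.inl ⟨ha, by simp [h]⟩
          · exact le_trans (Cardinal.mk_union_le _ _) (by rw [Cardinal.mk_singleton])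
        exact lt_of_le_of_lt h1
          (Cardinal.add_lt_of_lt hreg.1 hlt (lt_trans Cardinal.one_lt_aleph0 hun))
      have hBcard : #B = κ := le_antisymm
        (by rw [← hA]; exact Cardinal.mk_le_mk_of_subset hBA) (not_lt.1 hnotlt)
      obtain ⟨H, hHB, hHcard, hHfree⟩ := ihm (fun a => (f a).erase x) B hBcard
        (by
          intro a ha
          have h2 := hbound a (hBA ha)
          rw [Finset.card_erase_of_mem ha.1.2]
          omega)
      refine ⟨H, fun a ha => hBA (hHB ha), hHcard, ?_⟩
      intro a ha b hb hbf
      have hbx : b ≠ x := fun h => (hHB hb).2 (by simp [h])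
      exact hHfree a ha b hb (Finset.mem_erase.2 ⟨hbx, hbf⟩)
    · push_neg at hcase
      classical
      have hzorn : ∀ c ⊆ {H : Set β | H ⊆ A ∧ ∀ a ∈ H, ∀ b ∈ H, b ∈ f a → b = a},
          IsChain (· ⊆ ·) c → ∃ ub ∈ {H : Set β | H ⊆ A ∧ ∀ a ∈ H, ∀ b ∈ H, b ∈ f a → b = a},
            ∀ s ∈ c, s ⊆ ub := by
        intro c hcS hchain
        refine ⟨⋃₀ c ∪ ∅, ⟨?_, ?_⟩, ?_⟩
        · rw [Set.union_empty]
          exact Set.sUnion_subset (fun s hs => (hcS hs).1)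
        · rw [Set.union_empty]
          intro a ha b hb hbf
          obtain ⟨s1, hs1, ha1⟩ := Set.mem_sUnion.1 ha
          obtain ⟨s2, hs2, hb2⟩ := Set.mem_sUnion.1 hb
          rcases eq_or_ne s1 s2 with rfl | hne
          · exact (hcS hs1).2 a ha1 b hb2 hbf
          · rcases hchain hs1 hs2 hne with h | h
            · exact (hcS hs2).2 a (h ha1) b hb2 hbf
            · exact (hcS hs1).2 a ha1 b (h hb2) hbf
        · intro s hs
          rw [Set.union_empty]
          exact Set.subset_sUnion_of_mem hs
      obtain ⟨H, hmax⟩ := zorn_subset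
        {H : Set β | H ⊆ A ∧ ∀ a ∈ H, ∀ b ∈ H, b ∈ f a → b = a} hzorn
      obtain ⟨⟨hHA, hHfree⟩, hHmax⟩ := hmax
      refine ⟨H, hHA, ?_, hHfree⟩
      by_contra hne
      have hHlt : #H < κ := lt_of_le_of_ne
        (by rw [← hA]; exact Cardinal.mk_le_mk_of_subset hHA) hne
      have hcover : A ⊆ H ∪ ((⋃ h : H, ↑(f h)) ∪ ⋃ h : H, {a : β | a ∈ A ∧ (h : β) ∈ f a}) := by
        intro a ha
        by_cases haH : a ∈ H
        · exact Or.inl haH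
        · right
          have hnotfree : ¬ (insert a H ∈
              {H : Set β | H ⊆ A ∧ ∀ a ∈ H, ∀ b ∈ H, b ∈ f a → b = a}) := by
            intro hmem
            exact haH (hHmax hmem (Set.subset_insert a H) (Set.mem_insert a H))
          have hsub : insert a H ⊆ A := Set.insert_subset ha hHA
          have : ¬ (∀ c ∈ insert a H, ∀ b ∈ insert a H, b ∈ f c → b = c) := by
            intro h; exact hnotfree ⟨hsub, h⟩
          push_neg at this
          obtain ⟨c, hc, b, hb, hbf, hbc⟩ := this
          rcases Set.mem_insert_iff.1 hc with rfl | hcH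
          · rcases Set.mem_insert_iff.1 hb with rfl | hbH
            · exact absurd rfl hbc
            · -- b ∈ H, b ∈ f a : a is in third set with witness b
              exact Or.inr (Set.mem_iUnion.2 ⟨⟨b, hbH⟩, ⟨ha, hbf⟩⟩)
          · rcases Set.mem_insert_iff.1 hb with rfl | hbH
            · exact Or.inl (Set.mem_iUnion.2 ⟨⟨c, hcH⟩, hbf⟩)
            · exact absurd (hHfree c hcH b hbH hbf) hbc
      have hU1 : #(⋃ h : H, (↑(f h) : Set β)) < κ := by
        refine lt_of_le_of_lt Cardinal.mk_iUnion_le_sum_mk ?_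
        exact Cardinal.sum_lt_of_isRegular hreg hHlt
          (fun h => lt_trans (f h).finite_toSet.lt_aleph0 hun)
      have hU2 : #(⋃ h : H, {a : β | a ∈ A ∧ (h : β) ∈ f a}) < κ := by
        refine lt_of_le_of_lt Cardinal.mk_iUnion_le_sum_mk ?_
        exact Cardinal.sum_lt_of_isRegular hreg hHlt (fun h => hcase h)
      have : κ ≤ #(H ∪ ((⋃ h : H, ↑(f h)) ∪ ⋃ h : H, {a : β | a ∈ A ∧ (h : β) ∈ f a}) : Set β) := by
        rw [← hA]; exact Cardinal.mk_le_mk_of_subset hcover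
      have hlt : #(H ∪ ((⋃ h : H, ↑(f h)) ∪ ⋃ h : H, {a : β | a ∈ A ∧ (h : β) ∈ f a}) : Set β) < κ := by
        refine lt_of_le_of_lt (Cardinal.mk_union_le _ _) ?_
        refine Cardinal.add_lt_of_lt hreg.1 hHlt ?_
        exact lt_of_le_of_lt (Cardinal.mk_union_le _ _)
          (Cardinal.add_lt_of_lt hreg.1 hU1 hU2)
      exact absurd (lt_of_le_of_lt this hlt) (lt_irrefl κ)

/-- The free-set theorem for point mappings with finite values on a regular
uncountable cardinal: there is a free set of full size. -/
lemma exists_free_set {β : Type} {κ : Cardinal} (hβ : #β = κ) (hreg : κ.IsRegular)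
    (hun : ℵ₀ < κ) (f : β → Finset β) :
    ∃ H : Set β, #H = κ ∧ ∀ a ∈ H, ∀ b ∈ H, b ∈ f a → b = a := by
  have hex : ∃ m : ℕ, ¬ (#{a : β | (f a).card = m} < κ) := by
    by_contra h
    push_neg at h
    have hcover : (Set.univ : Set β) ⊆ ⋃ m : ℕ, {a : β | (f a).card = m} :=
      fun a _ => Set.mem_iUnion.2 ⟨(f a).card, rfl⟩
    have h1 : κ ≤ #(⋃ m : ℕ, {a : β | (f a).card = m}) := by
      rw [← hβ, ← Cardinal.mk_univ]
      exact Cardinal.mk_le_mk_of_subset hcover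
    have h2 : #(⋃ m : ℕ, {a : β | (f a).card = m}) < κ :=
      lt_of_le_of_lt Cardinal.mk_iUnion_le_sum_mk
        (Cardinal.sum_lt_of_isRegular hreg (by rw [Cardinal.mk_nat]; exact hun) h)
    exact absurd (lt_of_le_of_lt h1 h2) (lt_irrefl κ)
  obtain ⟨m, hm⟩ := hex
  have hAcard : #{a : β | (f a).card = m} = κ := le_antisymm
    (by rw [← hβ]; exact Cardinal.mk_set_le _) (not_lt.1 hm)
  obtain ⟨H, _, hHcard, hHfree⟩ := free_aux hreg hun m f _ hAcard
    (fun a ha => le_of_eq ha)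
  exact ⟨H, hHcard, hHfree⟩

lemma isFree_mono {α : Type*} [DecidableEq α] {𝓕 𝓖 : Finset (Finset α)} (hsub : 𝓕 ⊆ 𝓖)
    (hsup : 𝓕.sup id = 𝓖.sup id) {n : ℕ} (h : IsFree 𝓖 n) : IsFree 𝓕 n := by
  intro S
  obtain ⟨u, hu, hcond⟩ := h S
  refine ⟨u, by rw [hsup]; exact hu, fun A hA => by rw [hsup]; exact hcond A (hsub hA)⟩

lemma isFree_of_le {α : Type*} [DecidableEq α] {𝓕 : Finset (Finset α)} {n m : ℕ}
    (hnm : n ≤ m) (h : IsFree 𝓕 n) : IsFree 𝓕 m := by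
  classical
  have hle : #(OmegaN n) ≤ #(OmegaN m) := by
    rw [mk_omegaN, mk_omegaN]
    exact Cardinal.aleph_le_aleph.2 (by exact_mod_cast hnm)
  obtain ⟨emb⟩ := (Cardinal.le_def _ _).1 hle
  intro S
  set S' : Finset (OmegaN n) → Finset (OmegaN n) := fun F =>
    Finset.preimage (S (F.image emb)) emb emb.injective.injOn with hS'def
  obtain ⟨u', hu', hcond⟩ := h S'
  refine ⟨fun a => emb (u' a), fun a ha b hb hab => hu' ha hb (emb.injective hab), ?_⟩
  intro A hA y hy
  rw [Finset.mem_inter] at hy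
  obtain ⟨hy1, hy2⟩ := hy
  have him : ∀ B : Finset α, B.image (fun a => emb (u' a)) = (B.image u').image emb := by
    intro B; rw [Finset.image_image]; rfl
  rw [him] at hy2
  obtain ⟨z, hz, rfl⟩ := Finset.mem_image.1 hy2
  have hzS' : z ∈ S' (A.image u') := by
    rw [hS'def]
    refine Finset.mem_preimage.2 ?_
    rw [← him]
    exact hy1
  have hzin := hcond A hA (Finset.mem_inter.2 ⟨hzS', hz⟩)
  rw [him]
  exact Finset.mem_image_of_mem _ hzin

lemma exists_isFree {α : Type*} [DecidableEq α] (𝓕 : Finset (Finset α)) :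
    ∃ n, IsFree 𝓕 n := by
  classical
  refine ⟨(𝓕.sup id).card, ?_⟩
  intro S
  obtain ⟨Y, hYcard, hYfree⟩ := kuratowski (𝓕.sup id).card (OmegaN (𝓕.sup id).card)
    (mk_omegaN _) S
  have hcardle : Fintype.card {x // x ∈ 𝓕.sup id} ≤ Fintype.card {y // y ∈ Y} := by
    rw [Fintype.card_coe, Fintype.card_coe]; omega
  obtain ⟨f⟩ := Function.Embedding.nonempty_of_card_le hcardle
  set u : α → OmegaN (𝓕.sup id).card := fun a =>
    if h : a ∈ 𝓕.sup id then ((f ⟨a, h⟩ : {y // y ∈ Y}) : OmegaN (𝓕.sup id).card)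
    else Classical.arbitrary _ with hu
  have himY : ∀ a ∈ 𝓕.sup id, u a ∈ Y := by
    intro a ha
    rw [hu]; simp only [dif_pos ha]
    exact (f ⟨a, ha⟩).2
  have hinj : Set.InjOn u ↑(𝓕.sup id) := by
    intro a ha b hb hab
    rw [Finset.mem_coe] at ha hb
    rw [hu] at hab
    simp only [dif_pos ha, dif_pos hb] at hab
    have := f.injective (Subtype.ext hab)
    exact congrArg Subtype.val this
  refine ⟨u, hinj, ?_⟩
  intro A hA y hy
  rw [Finset.mem_inter] at hy
  obtain ⟨hy1, hy2⟩ := hy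
  have hAX : A ⊆ 𝓕.sup id := Finset.le_sup (f := id) hA
  have hAimg : A.image u ⊆ Y := by
    intro y' hy'
    obtain ⟨a, ha, rfl⟩ := Finset.mem_image.1 hy'
    exact himY a (hAX ha)
  have hyY : y ∈ Y := by
    obtain ⟨a, ha, rfl⟩ := Finset.mem_image.1 hy2
    exact himY a ha
  exact hYfree (A.image u) hAimg y hy1 hyY

lemma not_isFree_zero {α : Type*} [DecidableEq α] (big : Finset (Finset α)) (x1 x2 : α)
    (h1 : x1 ∈ big.sup id) (h2 : x2 ∈ big.sup id) (hne : x1 ≠ x2)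
    (hs1 : ({x1} : Finset α) ∈ big) (hs2 : ({x2} : Finset α) ∈ big) :
    ¬ IsFree big 0 := by
  classical
  intro hfree
  have hg : Nonempty (OmegaN 0 ≃ ℕ) := Cardinal.eq.1
    (by rw [mk_omegaN, Cardinal.mk_nat, Nat.cast_zero, Cardinal.aleph_zero])
  obtain ⟨g⟩ := hg
  set S : Finset (OmegaN 0) → Finset (OmegaN 0) := fun F =>
    (Finset.range ((F.image g).sup id)).image g.symm with hSdef
  obtain ⟨u, hinj, hcond⟩ := hfree S
  have key : ∀ a b : α, a ∈ big.sup id → b ∈ big.sup id → ({b} : Finset α) ∈ big →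
      g (u a) < g (u b) → False := by
    intro a b ha hb hbmem hlt
    have hcb := hcond {b} hbmem
    have himg : ({b} : Finset α).image u = {u b} := Finset.image_singleton u b
    have hmem : u a ∈ S (({b} : Finset α).image u) := by
      rw [himg]
      simp only [hSdef]
      have hsup1 : (({u b} : Finset (OmegaN 0)).image g).sup id = g (u b) := by
        rw [Finset.image_singleton, Finset.sup_singleton]; rfl
      rw [hsup1]
      exact Finset.mem_image.2 ⟨g (u a), Finset.mem_range.2 hlt, g.symm_apply_apply _⟩
    have hmem2 : u a ∈ (big.sup id).image u := Finset.mem_image_of_mem u ha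
    have hfin := hcb (Finset.mem_inter.2 ⟨hmem, hmem2⟩)
    rw [himg, Finset.mem_singleton] at hfin
    rw [hfin] at hlt
    exact lt_irrefl _ hlt
  have hne' : g (u x1) ≠ g (u x2) := by
    intro h
    exact hne (hinj (Finset.mem_coe.2 h1) (Finset.mem_coe.2 h2) (g.injective h))
  rcases lt_or_gt_of_ne hne' with h | h
  · exact key x1 x2 h1 h2 hs2 h
  · exact key x2 x1 h2 h1 hs1 h

lemma isFree_extend {α : Type*} [DecidableEq α] (𝓕 big : Finset (Finset α)) {n : ℕ}
    (hn : 1 ≤ n) (hsup : big.sup id = 𝓕.sup id)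
    (hmem : ∀ A ∈ big, A ∈ 𝓕 ∨ A = 𝓕.sup id ∨ ∃ x ∈ 𝓕.sup id, A = {x})
    (hfree : IsFree 𝓕 n) : IsFree big n := by
  classical
  obtain ⟨k, rfl⟩ : ∃ k, n = k + 1 := ⟨n - 1, by omega⟩
  have hreg : (aleph (k+1 : ℕ)).IsRegular := by
    have hcast : ((k+1 : ℕ) : Ordinal) = Order.succ (k : Ordinal) := by
      push_cast
      rw [Ordinal.add_one_eq_succ]
    rw [hcast]
    exact Cardinal.isRegular_aleph_succ _
  have hun : ℵ₀ < aleph (k+1 : ℕ) := by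
    rw [← Cardinal.aleph_zero]
    exact Cardinal.aleph_lt_aleph.2 (by exact_mod_cast Nat.succ_pos k)
  intro S
  obtain ⟨H, hHcard, hHfree⟩ := exists_free_set (mk_omegaN (k+1)) hreg hun (fun a => S {a})
  obtain ⟨e⟩ : Nonempty (OmegaN (k+1) ≃ H) := Cardinal.eq.1 (by rw [mk_omegaN, hHcard])
  set emb : OmegaN (k+1) → OmegaN (k+1) := fun z => (e z : OmegaN (k+1)) with hembdef
  have hinj : Function.Injective emb := fun a b hab => e.injective (Subtype.ext hab)
  have hrange : ∀ z, emb z ∈ H := fun z => (e z).2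
  set S' : Finset (OmegaN (k+1)) → Finset (OmegaN (k+1)) := fun F =>
    Finset.preimage (S (F.image emb)) emb hinj.injOn with hS'def
  obtain ⟨u', hu', hcond⟩ := hfree S'
  have him : ∀ B : Finset α, B.image (fun a => emb (u' a)) = (B.image u').image emb := by
    intro B; rw [Finset.image_image]; rfl
  refine ⟨fun a => emb (u' a), ?_, ?_⟩
  · rw [hsup]
    exact fun a ha b hb hab => hu' ha hb (hinj hab)
  · intro A hA y hy
    rw [Finset.mem_inter] at hy
    obtain ⟨hy1, hy2⟩ := hy
    rw [hsup] at hy2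
    rcases hmem A hA with hA𝓕 | hAX | ⟨x, hx, rfl⟩
    · rw [him] at hy2
      obtain ⟨z, hz, rfl⟩ := Finset.mem_image.1 hy2
      have hzS' : z ∈ S' (A.image u') := by
        rw [hS'def]
        refine Finset.mem_preimage.2 ?_
        rw [← him]
        exact hy1
      have hzin := hcond A hA𝓕 (Finset.mem_inter.2 ⟨hzS', hz⟩)
      rw [him]
      exact Finset.mem_image_of_mem _ hzin
    · rw [hAX]
      exact hy2
    · have hyH : y ∈ H := by
        rw [him] at hy2
        obtain ⟨z, _, rfl⟩ := Finset.mem_image.1 hy2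
        exact hrange z
      have himx : ({x} : Finset α).image (fun a => emb (u' a)) = {emb (u' x)} :=
        Finset.image_singleton _ x
      rw [himx] at hy1 ⊢
      rw [Finset.mem_singleton]
      exact hHfree (emb (u' x)) (hrange _) y hyH hy1

/-- Conditions (1)–(4) of a nested-orders family on `X`,
where a sequence `(t₁, …, t_k)` is represented by the list `[t₁, …, t_k]`. -/
def NestedBase {α : Type*} (X : Set α) (S : Set (List α)) : Prop :=
  (∀ l ∈ S, ∀ x ∈ l, x ∈ X) ∧
  (∀ t ∈ X, [t] ∈ S) ∧
  (∀ l ∈ S, l.Nodup) ∧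
  (∀ (l : List α) (t : α), l ++ [t] ∈ S → l ∈ S) ∧
  (∀ (l : List α) (s t : α), l ++ [s, t] ∈ S → l ++ [t] ∈ S) ∧
  (∀ (l : List α) (s t u : α), l ++ [s, t] ∈ S → l ++ [t, u] ∈ S → l ++ [s, u] ∈ S)

/-- A nested-orders family on `X`: conditions (1)–(5). -/
def IsNestedOrders {α : Type*} (X : Set α) (S : Set (List α)) : Prop :=
  NestedBase X S ∧
  ∀ (l : List α) (s t : α), l ++ [t] ∈ S → l ++ [s] ∈ S → t ≠ s →
    (l ++ [t, s] ∈ S ∨ l ++ [s, t] ∈ S)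

/-- An `n`-nested-orders family on `X`: sequences of length at most `n+2`,
conditions (1)–(4), and condition (5) for `k < n`. -/
def IsNNestedOrders {α : Type*} (n : ℕ) (X : Set α) (S : Set (List α)) : Prop :=
  NestedBase X S ∧
  (∀ l ∈ S, l.length ≤ n + 2) ∧
  ∀ (l : List α) (s t : α), l.length < n → l ++ [t] ∈ S → l ++ [s] ∈ S → t ≠ s →
    (l ++ [t, s] ∈ S ∨ l ++ [s, t] ∈ S)

/-- `A` satisfies the defining condition of membership in `𝓕_{𝔖,n}`: whenever
`(t₁, …, t_{n+2}) ∈ 𝔖` and `t₁, …, t_{n+1} ∈ A`, also `t_{n+2} ∈ A`. -/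
def MemFam {α : Type*} (n : ℕ) (S : Set (List α)) (A : Finset α) : Prop :=
  ∀ (l : List α) (t : α), l.length = n + 1 → l ++ [t] ∈ S →
    (∀ x ∈ l, x ∈ A) → t ∈ A

/-- The index `𝔫𝔬 𝓕`: the least `n` for which there is an `n`-nested-orders family `𝔖`
on `⋃ 𝓕` with `𝓕 ⊆ 𝓕_{𝔖,n}`. -/
noncomputable def no {α : Type*} [DecidableEq α] (𝓕 : Finset (Finset α)) : ℕ :=
  sInf {n | ∃ S : Set (List α),
    IsNNestedOrders n ↑(𝓕.sup id) S ∧ ∀ A ∈ 𝓕, MemFam n S A}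

/-- Adding the total set and all singletons:
`𝔣𝔯 (𝓕 ∪ {X} ∪ {{x} : x ∈ X}) = max 1 (𝔣𝔯 𝓕)` when `⋃ 𝓕 = X` and `|X| ≥ 2`. -/
theorem statement6 {α : Type*} [DecidableEq α] (X : Finset α) (hX : 2 ≤ X.card)
    (𝓕 : Finset (Finset α)) (hXF : 𝓕.sup id = X) :
    fr (𝓕 ∪ {X} ∪ X.image (fun x => ({x} : Finset α))) = max 1 (fr 𝓕) := by
  classical
  set big := 𝓕 ∪ {X} ∪ X.image (fun x => ({x} : Finset α)) with hbig
  have hXbig : X ∈ big := by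
    rw [hbig]
    exact Finset.mem_union_left _ (Finset.mem_union_right _ (Finset.mem_singleton_self X))
  have hsupbig : big.sup id = X := by
    apply le_antisymm
    · apply Finset.sup_le
      intro A hA
      rw [hbig] at hA
      rcases Finset.mem_union.1 hA with h | h
      · rcases Finset.mem_union.1 h with h' | h'
        · rw [← hXF]
          exact Finset.le_sup (f := id) h'
        · rw [Finset.mem_singleton.1 h']
          exact le_rfl
      · obtain ⟨x, hx, rfl⟩ := Finset.mem_image.1 h
        exact Finset.singleton_subset_iff.2 hx
    · exact Finset.le_sup (f := id) hXbig
  have h𝓕big : 𝓕 ⊆ big := fun A hA =>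
    Finset.mem_union_left _ (Finset.mem_union_left _ hA)
  have hmem : ∀ A ∈ big, A ∈ 𝓕 ∨ A = 𝓕.sup id ∨ ∃ x ∈ 𝓕.sup id, A = {x} := by
    intro A hA
    rw [hXF]
    rw [hbig] at hA
    rcases Finset.mem_union.1 hA with h | h
    · rcases Finset.mem_union.1 h with h' | h'
      · exact Or.inl h'
      · exact Or.inr (Or.inl (Finset.mem_singleton.1 h'))
    · obtain ⟨x, hx, rfl⟩ := Finset.mem_image.1 h
      exact Or.inr (Or.inr ⟨x, hx, rfl⟩)
  have hSF : {n | IsFree 𝓕 n}.Nonempty := exists_isFree 𝓕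
  have hm : IsFree 𝓕 (fr 𝓕) := Nat.sInf_mem hSF
  have hm' : IsFree 𝓕 (max 1 (fr 𝓕)) := isFree_of_le (le_max_right _ _) hm
  have hbigfree : IsFree big (max 1 (fr 𝓕)) :=
    isFree_extend 𝓕 big (le_max_left _ _) (by rw [hsupbig, hXF]) hmem hm'
  obtain ⟨x1, hx1, x2, hx2, hne⟩ := Finset.one_lt_card.1 (by omega : 1 < X.card)
  have hs1 : ({x1} : Finset α) ∈ big := by
    rw [hbig]; exact Finset.mem_union_right _ (Finset.mem_image_of_mem _ hx1)
  have hs2 : ({x2} : Finset α) ∈ big := by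
    rw [hbig]; exact Finset.mem_union_right _ (Finset.mem_image_of_mem _ hx2)
  have hnotzero : ¬ IsFree big 0 := not_isFree_zero big x1 x2
    (by rw [hsupbig]; exact hx1) (by rw [hsupbig]; exact hx2) hne hs1 hs2
  have hub : fr big ≤ max 1 (fr 𝓕) := Nat.sInf_le hbigfree
  have hmemInf : IsFree big (fr big) := Nat.sInf_mem (⟨max 1 (fr 𝓕), hbigfree⟩ : {n | IsFree big n}.Nonempty)
  have h1le : 1 ≤ fr big := by
    by_contra h
    push_neg at h
    have h0 : fr big = 0 := by omega
    rw [h0] at hmemInf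
    exact hnotzero hmemInf
  have hFle : fr 𝓕 ≤ fr big :=
    Nat.sInf_le (isFree_mono h𝓕big (by rw [hsupbig, hXF]) hmemInf)
  exact le_antisymm hub (max_le h1le hFle)
end
end

section
/- For every finite nonempty set X, 𝔣𝔯([X]^{<ω}) = |X| − 1, where [X]^{<ω} denotes the family of all subsets of X. -/
open Cardinal

noncomputable section

section FreeSetAux

lemma mkOmegaN (n : ℕ) : #(OmegaN n) = Cardinal.aleph n := by rw [Cardinal.mk_ord_toType]

instance instInfiniteOmegaN (n : ℕ) : Infinite (OmegaN n) :=
  Cardinal.infinite_iff.mpr (by rw [mkOmegaN]; exact Cardinal.aleph0_le_aleph _)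

/-- A type `γ` admits, for every set mapping `S`, a strongly free set of size `k`. -/
def HasFreeSet (γ : Type*) [DecidableEq γ] (k : ℕ) : Prop :=
  ∀ S : Finset γ → Finset γ, ∃ Y : Finset γ, Y.card = k ∧ ∀ A ⊆ Y, S A ∩ Y ⊆ A

/-- There is a set mapping on `γ` for which no set of size `k` is strongly free. -/
def HasBadMap (γ : Type*) [DecidableEq γ] (k : ℕ) : Prop :=
  ∃ S : Finset γ → Finset γ, ∀ Y : Finset γ, Y.card = k → ∃ A ⊆ Y, ¬ (S A ∩ Y ⊆ A)

lemma hasFreeSet_one (γ : Type*) [DecidableEq γ] [Infinite γ] : HasFreeSet γ 1 := by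
  intro S
  obtain ⟨y, hy⟩ := Infinite.exists_notMem_finset (S ∅)
  refine ⟨{y}, Finset.card_singleton y, fun A hA => ?_⟩
  rcases Finset.subset_singleton_iff.mp hA with rfl | rfl
  · intro z hz
    rw [Finset.mem_inter, Finset.mem_singleton] at hz
    exact absurd (hz.2 ▸ hz.1) hy
  · exact Finset.inter_subset_right

lemma hasFreeSet_step {β γ : Type u} [DecidableEq β] [DecidableEq γ] [Infinite β]
    (e : β ↪ γ) (hlt : #β < #γ) {k : ℕ} (hk : HasFreeSet β k) :
    HasFreeSet γ (k + 1) := by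
  classical
  intro S
  set U : Set γ := (⋃ B : Finset β, (S (B.image e) : Set γ)) ∪ Set.range e with hU
  have hUcard : #U < #γ := by
    refine lt_of_le_of_lt ?_ hlt
    refine (Cardinal.mk_union_le _ _).trans ?_
    have h1 : #(⋃ B : Finset β, (S (B.image e) : Set γ)) ≤ #β := by
      refine (Cardinal.mk_iUnion_le _).trans ?_
      have h2 : ⨆ B : Finset β, #(S (B.image e) : Set γ) ≤ ℵ₀ :=
        ciSup_le fun B => ((S (B.image e)).finite_toSet.lt_aleph0).le
      calc #(Finset β) * ⨆ B : Finset β, #(S (B.image e) : Set γ)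
          ≤ #(Finset β) * ℵ₀ := mul_le_mul_right h2 _
        _ = #β * ℵ₀ := by rw [Cardinal.mk_finset_of_infinite]
        _ = #β := Cardinal.mul_aleph0_eq (Cardinal.aleph0_le_mk β)
    calc #(⋃ B : Finset β, (S (B.image e) : Set γ)) + #(Set.range e)
        ≤ #β + #β := add_le_add h1 Cardinal.mk_range_le
      _ = #β := Cardinal.add_eq_self (Cardinal.aleph0_le_mk β)
  have hne : U ≠ Set.univ := by
    intro h
    rw [h, Cardinal.mk_univ] at hUcard
    exact lt_irrefl _ hUcard
  obtain ⟨x, hx⟩ := (Set.ne_univ_iff_exists_notMem U).mp hne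
  have hx1 : ∀ B : Finset β, x ∉ S (B.image e) := by
    intro B hxB
    exact hx (Set.mem_union_left _ (Set.mem_iUnion.mpr ⟨B, hxB⟩))
  have hx2 : x ∉ Set.range e := fun h => hx (Set.mem_union_right _ h)
  set S' : Finset β → Finset β :=
    fun B => (S (B.image e) ∪ S (insert x (B.image e))).preimage e e.injective.injOn with hS'
  obtain ⟨Y', hY'card, hY'free⟩ := hk S'
  refine ⟨insert x (Y'.image e), ?_, ?_⟩
  · rw [Finset.card_insert_of_notMem (fun h => hx2 ⟨_, (Finset.mem_image.mp h).choose_spec.2⟩),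
      Finset.card_image_of_injective _ e.injective, hY'card]
  · intro A hA y hy
    rw [Finset.mem_inter] at hy
    obtain ⟨hySA, hyY⟩ := hy
    set B : Finset β := (A.erase x).preimage e e.injective.injOn with hB
    have hBY' : B ⊆ Y' := by
      intro b hb
      rw [Finset.mem_preimage] at hb
      have : e b ∈ Y'.image e := by
        have := hA (Finset.mem_of_mem_erase hb)
        rcases Finset.mem_insert.mp this with h | h
        · exact absurd h (Finset.ne_of_mem_erase hb)
        · exact h
      obtain ⟨b', hb', heq⟩ := Finset.mem_image.mp this
      rwa [← e.injective heq]
    have hBim : B.image e = A.erase x := by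
      ext z
      simp only [hB, Finset.mem_image]
      constructor
      · rintro ⟨b, hb, rfl⟩
        rwa [Finset.mem_preimage] at hb
      · intro hz
        have hz' : z ∈ Y'.image e := by
          have := hA (Finset.mem_of_mem_erase hz)
          rcases Finset.mem_insert.mp this with h | h
          · exact absurd h (Finset.ne_of_mem_erase hz)
          · exact h
        obtain ⟨b, _, rfl⟩ := Finset.mem_image.mp hz'
        exact ⟨b, Finset.mem_preimage.mpr hz, rfl⟩
    by_cases hxA : x ∈ A
    · have hAeq : A = insert x (B.image e) := by rw [hBim, Finset.insert_erase hxA]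
      rcases Finset.mem_insert.mp hyY with rfl | hyim
      · exact hxA
      · obtain ⟨b, hbY', rfl⟩ := Finset.mem_image.mp hyim
        have hbS' : b ∈ S' B := by
          rw [hS', Finset.mem_preimage, Finset.mem_union]
          right
          rwa [hAeq] at hySA
        have := hY'free B hBY' (Finset.mem_inter.mpr ⟨hbS', hbY'⟩)
        have : e b ∈ B.image e := Finset.mem_image_of_mem e this
        rw [hBim] at this
        exact Finset.mem_of_mem_erase this
    · have hAeq : A = B.image e := by rw [hBim, Finset.erase_eq_of_notMem hxA]
      rcases Finset.mem_insert.mp hyY with rfl | hyim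
      · exact absurd (hAeq ▸ hySA) (hx1 B)
      · obtain ⟨b, hbY', rfl⟩ := Finset.mem_image.mp hyim
        have hbS' : b ∈ S' B := by
          rw [hS', Finset.mem_preimage, Finset.mem_union]
          left
          rwa [hAeq] at hySA
        have := hY'free B hBY' (Finset.mem_inter.mpr ⟨hbS', hbY'⟩)
        rw [hAeq]
        exact Finset.mem_image_of_mem e this

lemma hasFreeSet_omega : ∀ n : ℕ, HasFreeSet (OmegaN n) (n + 1) := by
  intro n
  induction n with
  | zero => exact hasFreeSet_one _
  | succ n ih =>
      have hle : #(OmegaN n) ≤ #(OmegaN (n+1)) := by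
        rw [mkOmegaN, mkOmegaN]
        exact (Cardinal.aleph_lt_aleph.mpr (by exact_mod_cast Nat.lt_succ_self n)).le
      obtain ⟨e⟩ := (Cardinal.le_def _ _).mp hle
      exact hasFreeSet_step e
        (by rw [mkOmegaN, mkOmegaN]
            exact Cardinal.aleph_lt_aleph.mpr (by exact_mod_cast Nat.lt_succ_self n)) ih

lemma hasBadMap_nat : HasBadMap ℕ 2 := by
  refine ⟨fun A => Finset.range (A.sup id), fun Y hY => ?_⟩
  have h1 : 1 < Y.card := by omega
  have hY0 : Y.Nonempty := by rw [← Finset.card_pos]; omega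
  have hlt := Y.min'_lt_max'_of_card h1
  refine ⟨{Y.max' hY0}, Finset.singleton_subset_iff.mpr (Y.max'_mem hY0), fun hsub => ?_⟩
  have : Y.min' hY0 ∈ ({Y.max' hY0} : Finset ℕ) := by
    refine hsub (Finset.mem_inter.mpr ⟨?_, Y.min'_mem hY0⟩)
    show Y.min' hY0 ∈ Finset.range (({Y.max' hY0} : Finset ℕ).sup id)
    rw [Finset.sup_singleton]
    exact Finset.mem_range.mpr hlt
  rw [Finset.mem_singleton] at this
  exact absurd this (ne_of_lt hlt)

lemma hasBadMap_equiv {β γ : Type*} [DecidableEq β] [DecidableEq γ] (e : β ≃ γ) {k : ℕ}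
    (h : HasBadMap β k) : HasBadMap γ k := by
  obtain ⟨S, hS⟩ := h
  refine ⟨fun A => (S (A.image e.symm)).image e, fun Y hY => ?_⟩
  have hY' : (Y.image e.symm).card = k := by
    rw [Finset.card_image_of_injective _ e.symm.injective, hY]
  obtain ⟨A', hA'sub, hA'bad⟩ := hS (Y.image e.symm) hY'
  refine ⟨A'.image e, ?_, ?_⟩
  · intro y hy
    obtain ⟨a, ha, rfl⟩ := Finset.mem_image.mp hy
    obtain ⟨y', hy', rfl⟩ := Finset.mem_image.mp (hA'sub ha)
    simpa using hy'
  · intro hsub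
    apply hA'bad
    intro z hz
    rw [Finset.mem_inter] at hz
    have him : (A'.image e).image e.symm = A' := by
      rw [Finset.image_image]
      simp
    have hmem : e z ∈ (S ((A'.image e).image e.symm)).image e ∩ Y := by
      rw [him, Finset.mem_inter]
      constructor
      · exact Finset.mem_image_of_mem e hz.1
      · obtain ⟨y, hy, hy2⟩ := Finset.mem_image.mp hz.2
        rwa [← hy2, Equiv.apply_symm_apply]
    have h2 := hsub hmem
    obtain ⟨a, ha, heq⟩ := Finset.mem_image.mp h2
    rwa [← e.injective heq]

section UpDown
variable {γ δ : Type*} [LinearOrder γ] [DecidableEq δ]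

/-- Push a finite subset of `γ` below `β` into `δ` via the injection `j β`. -/
noncomputable def upMap (j : ∀ β : γ, {y : γ // y < β} ↪ δ) (β : γ) (A : Finset γ) :
    Finset δ := by
  classical exact (A.subtype (fun y => y < β)).map (j β)

/-- Pull a finite subset of `δ` back to elements of `γ` below `β`. -/
noncomputable def downMap (j : ∀ β : γ, {y : γ // y < β} ↪ δ) (β : γ) (B : Finset δ) :
    Finset γ := by
  classical
  exact Finset.map (Function.Embedding.subtype fun y => y < β)
    (B.preimage (j β) (j β).injective.injOn)

omit [DecidableEq δ] in
lemma mem_upMap {j : ∀ β : γ, {y : γ // y < β} ↪ δ} {β : γ} {A : Finset γ} {d : δ} :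
    d ∈ upMap j β A ↔ ∃ (y : γ) (h : y < β), y ∈ A ∧ j β ⟨y, h⟩ = d := by
  classical
  unfold upMap
  constructor
  · intro hd
    rw [Finset.mem_map] at hd
    obtain ⟨⟨y, hy⟩, hmem, heq⟩ := hd
    rw [Finset.mem_subtype] at hmem
    exact ⟨y, hy, hmem, heq⟩
  · rintro ⟨y, hy, hmem, heq⟩
    rw [Finset.mem_map]
    exact ⟨⟨y, hy⟩, Finset.mem_subtype.mpr hmem, heq⟩

omit [DecidableEq δ] in
lemma mem_downMap {j : ∀ β : γ, {y : γ // y < β} ↪ δ} {β : γ} {B : Finset δ} {y : γ} :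
    y ∈ downMap j β B ↔ ∃ h : y < β, j β ⟨y, h⟩ ∈ B := by
  classical
  unfold downMap
  constructor
  · intro hy
    rw [Finset.mem_map] at hy
    obtain ⟨⟨z, hz⟩, hmem, heq⟩ := hy
    rw [Finset.mem_preimage] at hmem
    cases heq
    exact ⟨hz, hmem⟩
  · rintro ⟨h, hmem⟩
    rw [Finset.mem_map]
    exact ⟨⟨y, h⟩, Finset.mem_preimage.mpr hmem, rfl⟩

omit [DecidableEq δ] in
lemma card_upMap (j : ∀ β : γ, {y : γ // y < β} ↪ δ) (β : γ) (A : Finset γ)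
    [DecidablePred (· < β)] :
    (upMap j β A).card = (A.filter (fun y => y < β)).card := by
  classical
  unfold upMap
  rw [Finset.card_map, Finset.card_subtype]
  congr 1
  exact Finset.filter_congr_decidable ..

end UpDown

lemma hasBadMap_step (n k : ℕ) (h : HasBadMap (OmegaN n) k) :
    HasBadMap (OmegaN (n + 1)) (k + 1) := by
  classical
  obtain ⟨S0, hS0⟩ := h
  have hcard : ∀ β : OmegaN (n+1), #{y : OmegaN (n+1) // y < β} ≤ #(OmegaN n) := by
    intro β
    have h1 : #(Set.Iio β) < Cardinal.aleph ((n+1 : ℕ)) := Cardinal.mk_Iio_ord_toType β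
    have h2 : (Cardinal.aleph ((n+1 : ℕ))) = Order.succ (Cardinal.aleph (n : ℕ)) := by
      rw [Nat.cast_add_one, Ordinal.add_one_eq_succ, Cardinal.aleph_succ]
    rw [mkOmegaN]
    exact Order.lt_succ_iff.mp (h2 ▸ h1)
  have jE : ∀ β : OmegaN (n+1), {y : OmegaN (n+1) // y < β} ↪ OmegaN n :=
    fun β => ((Cardinal.le_def _ _).mp (hcard β)).some
  set S : Finset (OmegaN (n+1)) → Finset (OmegaN (n+1)) :=
    fun A => if hA : A.Nonempty then downMap jE (A.max' hA) (S0 (upMap jE (A.max' hA) A))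
      else ∅ with hSdef
  refine ⟨S, fun Y hYcard => ?_⟩
  have hY0 : Y.Nonempty := by rw [← Finset.card_pos]; omega
  set β := Y.max' hY0 with hβ
  set Z : Finset (OmegaN n) := upMap jE β Y with hZ
  have hfilt : Y.filter (fun y => y < β) = Y.erase β := by
    ext y
    rw [Finset.mem_filter, Finset.mem_erase]
    constructor
    · exact fun ⟨h1, h2⟩ => ⟨ne_of_lt h2, h1⟩
    · exact fun ⟨h1, h2⟩ => ⟨h2, lt_of_le_of_ne (Y.le_max' y h2) h1⟩
  have hZcard : Z.card = k := by
    rw [hZ, card_upMap, hfilt, Finset.card_erase_of_mem (Y.max'_mem hY0), hYcard]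
    omega
  obtain ⟨B, hBZ, hBbad⟩ := hS0 Z hZcard
  set A : Finset (OmegaN (n+1)) := insert β (downMap jE β B) with hA
  have hdownY : downMap jE β B ⊆ Y := by
    intro y hy
    obtain ⟨hlt, hmem⟩ := mem_downMap.mp hy
    obtain ⟨y', hlt', hy', heq⟩ := mem_upMap.mp (hBZ hmem)
    have : (⟨y', hlt'⟩ : {z : OmegaN (n+1) // z < β}) = ⟨y, hlt⟩ := (jE β).injective heq
    have hval : y' = y := congrArg Subtype.val this
    rw [← hval]
    exact hy'
  have hAY : A ⊆ Y := by
    rw [hA]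
    exact Finset.insert_subset (Y.max'_mem hY0) hdownY
  have hAne : A.Nonempty := ⟨β, Finset.mem_insert_self _ _⟩
  have hAmax : A.max' hAne = β := by
    apply le_antisymm
    · apply Finset.max'_le
      intro y hy
      rcases Finset.mem_insert.mp hy with rfl | hy'
      · exact le_refl _
      · exact (mem_downMap.mp hy').1.le
    · exact Finset.le_max' _ _ (Finset.mem_insert_self _ _)
  have hupA : upMap jE β A = B := by
    ext d
    rw [mem_upMap]
    constructor
    · rintro ⟨y, hlt, hyA, rfl⟩
      rcases Finset.mem_insert.mp hyA with rfl | hy'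
      · exact absurd hlt (lt_irrefl _)
      · obtain ⟨hlt2, hmem⟩ := mem_downMap.mp hy'
        convert hmem using 2
    · intro hd
      obtain ⟨y, hlt, hyZ, heq⟩ := mem_upMap.mp (hBZ hd)
      refine ⟨y, hlt, ?_, heq⟩
      rw [hA, Finset.mem_insert]
      right
      rw [mem_downMap]
      exact ⟨hlt, heq ▸ hd⟩
  have hSA : S A = downMap jE β (S0 B) := by
    rw [hSdef]
    simp only [dif_pos hAne]
    rw [hAmax, hupA]
  obtain ⟨z, hzmem, hzB⟩ := Finset.not_subset.mp hBbad
  rw [Finset.mem_inter] at hzmem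
  obtain ⟨y, hlt, hyY, heq⟩ := mem_upMap.mp hzmem.2
  refine ⟨A, hAY, fun hsub => ?_⟩
  have hymem : y ∈ S A ∩ Y := by
    rw [Finset.mem_inter, hSA]
    exact ⟨mem_downMap.mpr ⟨hlt, heq ▸ hzmem.1⟩, hyY⟩
  have hyA := hsub hymem
  rcases Finset.mem_insert.mp hyA with rfl | hy'
  · exact absurd hlt (lt_irrefl _)
  · obtain ⟨hlt2, hmem⟩ := mem_downMap.mp hy'
    apply hzB
    rw [← heq]
    convert hmem using 2

lemma hasBadMap_omega : ∀ k : ℕ, HasBadMap (OmegaN k) (k + 2) := by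
  intro k
  induction k with
  | zero =>
      have hmk : #ℕ = #(OmegaN 0) := by
        rw [mkOmegaN, Cardinal.mk_nat]
        simp
      obtain ⟨e⟩ := Cardinal.eq.mp hmk
      exact hasBadMap_equiv e hasBadMap_nat
  | succ k ih => exact hasBadMap_step k (k + 2) ih

lemma sup_powerset_id {α : Type*} [DecidableEq α] (X : Finset α) : X.powerset.sup id = X :=
  le_antisymm (Finset.sup_le fun A hA => Finset.mem_powerset.mp hA)
    (Finset.le_sup (f := id) (Finset.mem_powerset_self X))

lemma isFree_powerset {α : Type*} [DecidableEq α] (X : Finset α) (hX : X.Nonempty) :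
    IsFree X.powerset (X.card - 1) := by
  classical
  intro S
  obtain ⟨Y, hYcard, hYfree⟩ := hasFreeSet_omega (X.card - 1) S
  have h1 : 1 ≤ X.card := Finset.card_pos.mpr hX
  have hcards : X.card = Y.card := by rw [hYcard]; omega
  set eqv := Finset.equivOfCardEq hcards with heqv
  obtain ⟨x₀, hx₀⟩ := hX
  set u : α → OmegaN (X.card - 1) :=
    fun a => if h : a ∈ X then (eqv ⟨a, h⟩).1 else (eqv ⟨x₀, hx₀⟩).1 with hu
  have hinj : Set.InjOn u ↑(X.powerset.sup id) := by
    rw [sup_powerset_id]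
    intro a ha b hb hab
    rw [Finset.mem_coe] at ha hb
    rw [hu] at hab
    simp only [dif_pos ha, dif_pos hb] at hab
    have h2 := eqv.injective (Subtype.ext hab)
    exact congrArg Subtype.val h2
  have himage : X.image u = Y := by
    ext y
    constructor
    · intro hy
      obtain ⟨a, ha, rfl⟩ := Finset.mem_image.mp hy
      rw [hu]
      simp only [dif_pos ha]
      exact (eqv ⟨a, ha⟩).2
    · intro hy
      refine Finset.mem_image.mpr ⟨(eqv.symm ⟨y, hy⟩).1, (eqv.symm ⟨y, hy⟩).2, ?_⟩
      rw [hu]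
      simp only [dif_pos (eqv.symm ⟨y, hy⟩).2, Subtype.coe_eta, Equiv.apply_symm_apply]
  refine ⟨u, hinj, ?_⟩
  intro A hA
  rw [sup_powerset_id, himage]
  exact hYfree (A.image u)
    (by rw [← himage]; exact Finset.image_subset_image (Finset.mem_powerset.mp hA))

lemma not_isFree_powerset {α : Type*} [DecidableEq α] (X : Finset α) (k : ℕ)
    (h2 : k + 2 ≤ X.card) : ¬ IsFree X.powerset k := by
  classical
  intro hfree
  obtain ⟨S, hS⟩ := hasBadMap_omega k
  obtain ⟨u, hinj, hsub⟩ := hfree S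
  rw [sup_powerset_id] at hinj hsub
  have hYcard : (X.image u).card = X.card := Finset.card_image_of_injOn hinj
  obtain ⟨Y₀, hY₀sub, hY₀card⟩ :=
    Finset.exists_subset_card_eq (show k + 2 ≤ (X.image u).card by omega)
  obtain ⟨A', hA'Y₀, hA'bad⟩ := hS Y₀ hY₀card
  set A : Finset α := X.filter (fun a => u a ∈ A') with hA
  have hApow : A ∈ X.powerset := Finset.mem_powerset.mpr (Finset.filter_subset _ _)
  have him : A.image u = A' := by
    ext y
    constructor
    · intro hy
      obtain ⟨a, ha, rfl⟩ := Finset.mem_image.mp hy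
      exact (Finset.mem_filter.mp ha).2
    · intro hy
      have hyY : y ∈ X.image u := hY₀sub (hA'Y₀ hy)
      obtain ⟨a, ha, rfl⟩ := Finset.mem_image.mp hyY
      exact Finset.mem_image.mpr ⟨a, Finset.mem_filter.mpr ⟨ha, hy⟩, rfl⟩
  apply hA'bad
  intro z hz
  rw [Finset.mem_inter] at hz
  have h3 := hsub A hApow (Finset.mem_inter.mpr ⟨by rw [him]; exact hz.1, hY₀sub hz.2⟩)
  rwa [him] at h3

end FreeSetAux

/-- `𝔣𝔯` of the family of all subsets of a finite nonempty set `X` is `|X| - 1`. -/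
theorem statement15 {α : Type*} [DecidableEq α] (X : Finset α) (hX : X.Nonempty) :
    fr X.powerset = X.card - 1 := by
  classical
  have h1 : 1 ≤ X.card := Finset.card_pos.mpr hX
  apply le_antisymm
  · exact Nat.sInf_le (isFree_powerset X hX)
  · apply le_csInf ⟨_, isFree_powerset X hX⟩
    intro k hk
    by_contra hlt
    push_neg at hlt
    exact not_isFree_powerset X k (by omega) hk

end
end
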